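/- arXiv:1410.8329 — 2 statements merged into one kernel-verified Lean document; each statement's English description precedes it below -/
import Mathlib

section
/- Let (i,j) be an outer corner of a valid set of pairs D (i.e. (i,j) ∉ D and D ∪ {(i,j)} is a valid set of pairs), and let μ be a finitely supported integer sequence with μ_i > k ≥ μ_j. Let ρ := r·ε_j for some integer r ≤ 1, and set γ := γ(D, μ+ρ). Then in ℤ[c,t]: T(D, μ+ρ) = T(D∪{(i,j)}, μ+ρ) + T(D∪{(i,j)}, μ+R_{ij}ρ) + (t_{γ_i − 1} − t_{γ_j}) · R^{D∪{(i,j)}} c^{γ}_{μ+ρ−ε_j}, where t_m := t_{-m} for m < 0. In particular, if μ_i + μ_j + ρ_j = 2k + 1 + a_j(D), then T(D, μ+ρ) = T(D∪{(i,j)}, μ+ρ) + T(D∪{(i,j)}, μ+R_{ij}ρ). -/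
open scoped Classical

noncomputable section

/-- The polynomial ring ℤ[c,t]: variables `Sum.inl p` (p ≥ 1) are the `c` variables,
variables `Sum.inr i` (i ≥ 1) are the `t` variables. -/
abbrev P : Type := MvPolynomial (ℕ ⊕ ℕ) ℤ

/-- t_r, with the convention t_r = t_{-r} for r < 0. -/
def tvar (r : ℤ) : P := MvPolynomial.X (Sum.inr r.natAbs)

/-- c_p, with c_0 = 1 and c_p = 0 for p < 0. -/
def cvar (p : ℤ) : P :=
  if p = 0 then 1 else if p < 0 then 0 else MvPolynomial.X (Sum.inl p.toNat)

def negT (i : ℕ) : P := - MvPolynomial.X (Sum.inr i)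

/-- e_j(-t_1,…,-t_m). -/
def esymNT (m j : ℕ) : P :=
  ∑ S ∈ Finset.powersetCard j (Finset.Icc 1 m), ∏ i ∈ S, negT i

/-- h_j(-t_1,…,-t_m). -/
def hsymNT (m j : ℕ) : P :=
  ∑ f ∈ (Finset.Icc 1 m).sym j, (Multiset.map negT (f : Multiset ℕ)).prod

/-- h^r_j(-t): complete homogeneous for r ≥ 0, elementary in |r| variables for r < 0,
and 0 for j < 0. -/
def hNT (r j : ℤ) : P :=
  if j < 0 then 0
  else if 0 ≤ r then hsymNT r.toNat j.toNat
  else esymNT (-r).toNat j.toNat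

/-- c^r_p = Σ_{j=0}^p c_{p-j} h^r_j(-t). -/
def cc (r p : ℤ) : P :=
  ∑ j ∈ Finset.range (p.toNat + 1), cvar (p - j) * hNT r j

/-- c^β_α = Π_i c^{β_i}_{α_i} (sequences are indexed from 1; entry 0 is inert since c^r_0 = 1). -/
def cmon (β α : ℕ → ℤ) : P := ∏ᶠ i, cc (β i) (α i)

/-- The sequence obtained from α by the raising-operator monomial Π_{(i,j)} R_{ij}^{n(i,j)}. -/
def raiseSeq (n : (ℕ × ℕ) →₀ ℕ) (α : ℕ → ℤ) : ℕ → ℤ := fun m =>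
  α m + ∑ p ∈ n.support, (n p : ℤ) * ((if p.1 = m then 1 else 0) - (if p.2 = m then 1 else 0))

/-- Coefficient of R^m in the factor attached to one pair: (1-R) if `a` only,
(1+R)⁻¹ if `b` only, (1-R)(1+R)⁻¹ if both, 1 if neither (only evaluated at m ≥ 1). -/
def pairCoeff (a b : Prop) (m : ℕ) : ℤ :=
  if a then (if b then 2 * (-1 : ℤ)^m else if m ≤ 1 then (-1 : ℤ)^m else 0)
  else (if b then (-1 : ℤ)^m else 0)

def roCoeff (A B : Set (ℕ × ℕ)) (n : (ℕ × ℕ) →₀ ℕ) : ℤ :=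
  ∏ p ∈ n.support, pairCoeff (p ∈ A) (p ∈ B) (n p)

/-- Apply the raising operator expression Π_{p∈A}(1-R_p) · Π_{p∈B}(1+R_p)⁻¹ to c^β_α. -/
def applyRO (A B : Set (ℕ × ℕ)) (β α : ℕ → ℤ) : P :=
  ∑ᶠ n : (ℕ × ℕ) →₀ ℕ, (roCoeff A B n) • cmon β (raiseSeq n α)

/-- The set Δ° of all pairs (i,j) with 1 ≤ i < j. -/
def Upper : Set (ℕ × ℕ) := {p | 1 ≤ p.1 ∧ p.1 < p.2}

/-- A valid set of pairs: a finite order ideal of Δ°. -/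
def ValidPairs (D : Set (ℕ × ℕ)) : Prop :=
  D ⊆ Upper ∧ D.Finite ∧
    ∀ p ∈ D, ∀ q ∈ Upper, q.1 ≤ p.1 → q.2 ≤ p.2 → q ∈ D

/-- a_j(D) = #{i < j : (i,j) ∉ D}. -/
def aD (D : Set (ℕ × ℕ)) (j : ℕ) : ℕ :=
  ((Finset.Ico 1 j).filter (fun i => (i, j) ∉ D)).card

/-- γ_j(D,μ) = k + 1 - μ_j + a_j(D). -/
def gammaSeq (k : ℕ) (D : Set (ℕ × ℕ)) (μ : ℕ → ℤ) (j : ℕ) : ℤ :=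
  (k : ℤ) + 1 - μ j + aD D j

/-- T(D,μ) = R^D c^{γ(D,μ)}_μ, where R^D = Π_{i<j}(1-R_{ij}) Π_{(i,j)∈D}(1+R_{ij})⁻¹. -/
def Tpol (k : ℕ) (D : Set (ℕ × ℕ)) (μ : ℕ → ℤ) : P :=
  applyRO Upper D (gammaSeq k D μ) μ

def FinSupp (α : ℕ → ℤ) : Prop := ∃ N, ∀ m, N ≤ m → α m = 0

/-- Partitions, as integer sequences indexed from 1 (entry 0 is 0). -/
def IsPartition (lam : ℕ → ℤ) : Prop :=
  lam 0 = 0 ∧ (∀ i, 1 ≤ i → 0 ≤ lam i) ∧ (∀ i, 1 ≤ i → lam (i+1) ≤ lam i) ∧ FinSupp lam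

/-- k-strict partitions: parts greater than k are distinct. -/
def IsKStrict (k : ℕ) (lam : ℕ → ℤ) : Prop :=
  IsPartition lam ∧ ∀ i, 1 ≤ i → (k : ℤ) < lam i → lam (i+1) < lam i

/-- C(λ) = {(i,j) : 1 ≤ i < j, λ_i + λ_j > 2k + j - i}. -/
def Cset (k : ℕ) (lam : ℕ → ℤ) : Set (ℕ × ℕ) :=
  {p | 1 ≤ p.1 ∧ p.1 < p.2 ∧ 2*(k:ℤ) + (p.2:ℤ) - (p.1:ℤ) < lam p.1 + lam p.2}

/-- β_j(λ) = k + 1 - λ_j + #{i < j : (i,j) ∉ C(λ)}. -/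
def betaSeq (k : ℕ) (lam : ℕ → ℤ) (j : ℕ) : ℤ :=
  (k : ℤ) + 1 - lam j + ((Finset.Ico 1 j).filter (fun i => (i, j) ∉ Cset k lam)).card

/-- The double theta polynomial Θ_λ(c|t) = R^λ c^{β(λ)}_λ. -/
def Theta (k : ℕ) (lam : ℕ → ℤ) : P :=
  applyRO Upper (Cset k lam) (betaSeq k lam) lam

def zeroSeq : ℕ → ℤ := fun _ => 0

/-- The single theta polynomial Θ_λ(c) = R^λ c_λ. -/
def ThetaSingle (k : ℕ) (lam : ℕ → ℤ) : P :=
  applyRO Upper (Cset k lam) zeroSeq lam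

/-- The ideal generated by I^{(k)} in ℤ[c,t]. -/
def Ik (k : ℕ) : Ideal P :=
  Ideal.span {x | ∃ p : ℕ, k < p ∧
    x = cvar (p:ℤ) * cvar (p:ℤ)
      + 2 * ∑ i ∈ Finset.Icc 1 p, (-1 : P)^i * (cvar ((p : ℤ) + i) * cvar ((p : ℤ) - i))}

/-- ℤ[t] = polynomials in t₁, t₂, …; variable n stands for t_{n+1}. -/
abbrev Zt : Type := MvPolynomial ℕ ℤ

/-- The embedding ℤ[t] → ℤ[c,t]. -/
def tEmbed : Zt →+* P :=
  (MvPolynomial.aeval (fun n : ℕ => (MvPolynomial.X (Sum.inr (n+1)) : P))).toRingHom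

/-- α ↦ α + r·ε_j. -/
def addAt (α : ℕ → ℤ) (j : ℕ) (r : ℤ) : ℕ → ℤ := fun m => α m + if m = j then r else 0

def epsSeq (j : ℕ) : ℕ → ℤ := fun m => if m = j then 1 else 0

/-- The sequence (λ_1,…,λ_{j-1}, r, s, μ_{j+2},…) with prescribed entries r, s at j, j+1. -/
def twoSet (ν : ℕ → ℤ) (j : ℕ) (r s : ℤ) : ℕ → ℤ :=
  fun m => if m = j then r else if m = j+1 then s else ν m

/-- Pairs (i,j) with 1 ≤ i < j ≤ ℓ. -/
def BddPairs (ℓ : ℕ) : Set (ℕ × ℕ) := {p | 1 ≤ p.1 ∧ p.1 < p.2 ∧ p.2 ≤ ℓ}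

/-- Boxes [r,c] and [r',c'] are k-related: |c-k-1| + r = |c'-k-1| + r'. -/
def kRel (k : ℕ) (r c r' c' : ℤ) : Prop :=
  |c - (k:ℤ) - 1| + r = |c' - (k:ℤ) - 1| + r'

/-- Case (i) of λ → μ: μ is obtained from λ by adding a single box (in some row h). -/
def ArrowBox (lam μ : ℕ → ℤ) : Prop :=
  ∃ h : ℕ, 1 ≤ h ∧ ∀ m, μ m = lam m + if m = h then 1 else 0

/-- Case (ii) of λ → μ: remove r boxes from a column c ≤ k of λ (giving ν) and add r+1
boxes to a single row h of ν, so that the removed boxes and the bottom box of μ in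
column c are each k-related to one of the added boxes. -/
def ArrowMove (k : ℕ) (lam μ : ℕ → ℤ) : Prop :=
  ∃ c h r : ℕ, 1 ≤ c ∧ c ≤ k ∧ 1 ≤ h ∧ 1 ≤ r ∧
    ∃ ν : ℕ → ℤ, IsPartition ν ∧
      ∃ S : Finset ℕ, S.card = r ∧
        (∀ x ∈ S, 1 ≤ x ∧ lam x = (c:ℤ) ∧ ν x = (c:ℤ) - 1) ∧
        (∀ x, x ∉ S → ν x = lam x) ∧
        (∀ m, μ m = ν m + if m = h then (r:ℤ) + 1 else 0) ∧
        (∀ x ∈ S, ∃ y : ℤ, ν h + 1 ≤ y ∧ y ≤ ν h + r + 1 ∧ kRel k x c h y) ∧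
        (∀ b : ℕ, 1 ≤ b → (c:ℤ) ≤ μ b → μ (b+1) < (c:ℤ) →
          ∃ y : ℤ, ν h + 1 ≤ y ∧ y ≤ ν h + r + 1 ∧ kRel k b c h y)

/-- λ → μ for k-strict partitions. -/
def ChevArrow (k : ℕ) (lam μ : ℕ → ℤ) : Prop :=
  IsKStrict k μ ∧ (ArrowBox lam μ ∨ ArrowMove k lam μ)

/-- The Chevalley coefficient e_{λμ}: 2 iff μ ⊃ λ with added box neither in column k+1
nor k-related to a bottom box in one of the first k columns of λ; 1 otherwise. -/
def eCoeff (k : ℕ) (lam μ : ℕ → ℤ) : ℤ :=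
  if ∃ h : ℕ, 1 ≤ h ∧ (∀ m, μ m = lam m + if m = h then 1 else 0) ∧
      lam h + 1 ≠ (k:ℤ) + 1 ∧
      ¬ ∃ c x : ℕ, 1 ≤ c ∧ c ≤ k ∧ 1 ≤ x ∧ (c:ℤ) ≤ lam x ∧ lam (x+1) < (c:ℤ) ∧
          kRel k x c h (lam h + 1)
  then 2 else 1

/-- Correspondence between k-strict partitions contained in the (n-k)×(n+k) rectangle and
k-Grassmannian elements of W_n (one-line notation w : ℕ → ℤ on indices 1..n). -/
def GrassCorrespond (k n : ℕ) (w : ℕ → ℤ) (lam : ℕ → ℤ) : Prop :=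
  (∀ m, 1 ≤ m → m ≤ n → 1 ≤ (w m).natAbs ∧ (w m).natAbs ≤ n) ∧
  (∀ m m', 1 ≤ m → m ≤ n → 1 ≤ m' → m' ≤ n → (w m).natAbs = (w m').natAbs → m = m') ∧
  (∀ m, 1 ≤ m → m ≤ k → 0 < w m) ∧
  (∀ m, 1 ≤ m → m + 1 ≤ k → w m < w (m+1)) ∧
  (∀ m, k + 1 ≤ m → m + 1 ≤ n → w m < w (m+1)) ∧
  (∀ i, 1 ≤ i → k + i ≤ n →
    (w (k+i) < 0 → lam i = (k:ℤ) + ((w (k+i)).natAbs : ℤ)) ∧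
    (0 < w (k+i) → lam i = (((Finset.Icc 1 k).filter (fun p => w (k+i) < w p)).card : ℤ))) ∧
  (∀ i, n - k < i → lam i = 0)

/-- The simple reflection s_i acting on the values ±1, …, ±n of signed permutations. -/
def sRefl (i : ℕ) (x : ℤ) : ℤ :=
  if i = 0 then (if x = 1 then -1 else if x = -1 then 1 else x)
  else if x = (i:ℤ) then (i:ℤ)+1
  else if x = (i:ℤ)+1 then (i:ℤ)
  else if x = -(i:ℤ) then -((i:ℤ)+1)
  else if x = -((i:ℤ)+1) then -(i:ℤ)
  else x

/-- Images of the variables under the automorphism s_i of ℤ[c,t]. -/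
def sImage (i : ℕ) : (ℕ ⊕ ℕ) → P
  | Sum.inl p =>
      if i = 0 then
        (if p = 0 then MvPolynomial.X (Sum.inl 0) else
          cvar (p:ℤ) + 2 * ∑ j ∈ Finset.Icc 1 p, (negT 1)^j * cvar ((p:ℤ) - (j:ℤ)))
      else MvPolynomial.X (Sum.inl p)
  | Sum.inr m =>
      if i = 0 then (if m = 1 then negT 1 else MvPolynomial.X (Sum.inr m))
      else if m = i then MvPolynomial.X (Sum.inr (i+1))
      else if m = i+1 then MvPolynomial.X (Sum.inr i)
      else MvPolynomial.X (Sum.inr m)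

/-- The ring endomorphism s_i of ℤ[c,t]. -/
def sAut (i : ℕ) : P →+* P := (MvPolynomial.aeval (sImage i)).toRingHom

/-- Denominator of the divided difference ∂_i: 2t₁ for i = 0, t_{i+1} - t_i for i ≥ 1. -/
def dden (i : ℕ) : P :=
  if i = 0 then 2 * MvPolynomial.X (Sum.inr 1)
  else MvPolynomial.X (Sum.inr (i+1)) - MvPolynomial.X (Sum.inr i)

/-- The divided difference operator ∂_i: the (unique, since P is a domain) quotient
(f - s_i f)/(denominator) whenever the division is exact. -/
def ddiff (i : ℕ) (f : P) : P :=
  if h : ∃ g : P, f - sAut i f = dden i * g then h.choose else 0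

section Aux

open Finset

lemma hsymNT_zero (m : ℕ) : hsymNT m 0 = 1 := by
  unfold hsymNT
  rw [Finset.sym_zero, Finset.sum_singleton]
  rfl

lemma esymNT_zero (m : ℕ) : esymNT m 0 = 1 := by unfold esymNT; simp

lemma hNT_zero (r : ℤ) : hNT r 0 = 1 := by
  unfold hNT
  norm_num
  split <;> simp [hsymNT_zero, esymNT_zero]

lemma hNT_of_neg (r j : ℤ) (h : j < 0) : hNT r j = 0 := by
  unfold hNT; simp [h]

lemma cc_zero (r : ℤ) : cc r 0 = 1 := by
  unfold cc
  simp [hNT_zero, cvar]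

lemma cc_of_neg (r p : ℤ) (h : p < 0) : cc r p = 0 := by
  unfold cc
  have h0 : p.toNat = 0 := Int.toNat_of_nonpos h.le
  rw [h0, Finset.sum_range_one]
  have hc : cvar (p - (0:ℕ)) = 0 := by unfold cvar; rw [if_neg (by omega), if_pos (by omega)]
  rw [hc, zero_mul]

end Aux

section Rec

open Finset

lemma esymNT_rec (m j : ℕ) :
    esymNT (m+1) (j+1) = esymNT m (j+1) + negT (m+1) * esymNT m j := by
  unfold esymNT
  have hIcc : Finset.Icc 1 (m+1) = insert (m+1) (Finset.Icc 1 m) := by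
    ext a; simp [Finset.mem_Icc, Finset.mem_insert]; omega
  have hnm : (m+1) ∉ Finset.Icc 1 m := by simp
  rw [hIcc, Finset.powersetCard_succ_insert hnm, Finset.sum_union, Finset.sum_image]
  · congr 1
    rw [Finset.mul_sum]
    refine Finset.sum_congr rfl fun S hS => ?_
    rw [Finset.prod_insert (fun h => hnm ((Finset.mem_powersetCard.1 hS).1 h))]
  · intro S hS T hT hST
    have hS' := (Finset.mem_powersetCard.1 hS).1
    have hT' := (Finset.mem_powersetCard.1 hT).1
    have : S = (insert (m+1) S).erase (m+1) := by
      rw [Finset.erase_insert (fun h => hnm (hS' h))]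
    rw [this, hST, Finset.erase_insert (fun h => hnm (hT' h))]
  · rw [Finset.disjoint_right]
    rintro S hS hS'
    obtain ⟨T, hT, rfl⟩ := Finset.mem_image.1 hS
    have := (Finset.mem_powersetCard.1 hS').1 (Finset.mem_insert_self _ _)
    exact hnm this

lemma hsymNT_rec (m j : ℕ) :
    hsymNT (m+1) (j+1) = hsymNT m (j+1) + negT (m+1) * hsymNT (m+1) j := by
  unfold hsymNT
  have key : (Finset.Icc 1 m).sym (j+1)
      = ((Finset.Icc 1 (m+1)).sym (j+1)).filter (fun f => (m+1) ∉ f) := by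
    ext f
    simp only [Finset.mem_filter, Finset.mem_sym_iff, Finset.mem_Icc]
    constructor
    · intro h
      exact ⟨fun a ha => by have := h a ha; omega,
        fun hmem => by have := h _ hmem; omega⟩
    · rintro ⟨h1, h2⟩ a ha
      have := h1 a ha
      have : a ≠ m + 1 := fun he => h2 (he ▸ ha)
      have := h1 a ha
      omega
  have split : ∑ f ∈ (Finset.Icc 1 (m+1)).sym (j+1), (Multiset.map negT (f : Multiset ℕ)).prod
      = ∑ f ∈ ((Finset.Icc 1 (m+1)).sym (j+1)).filter (fun f => (m+1) ∉ f),
          (Multiset.map negT (f : Multiset ℕ)).prod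
        + ∑ f ∈ ((Finset.Icc 1 (m+1)).sym (j+1)).filter (fun f => (m+1) ∈ f),
          (Multiset.map negT (f : Multiset ℕ)).prod := by
    rw [← Finset.sum_filter_add_sum_filter_not ((Finset.Icc 1 (m+1)).sym (j+1))
      (fun f => (m+1) ∈ f)]
    ring
  rw [split, ← key]
  congr 1
  -- second piece: bijection with sym j via erase/cons
  rw [Finset.mul_sum]
  refine Finset.sum_bij' (fun f hf => f.erase (m+1) (Finset.mem_filter.1 hf).2)
    (fun g hg => Sym.cons (m+1) g) ?_ ?_ ?_ ?_ ?_
  · intro f hf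
    simp only [Finset.mem_sym_iff]
    intro a ha
    have ha' : a ∈ ((f.erase (m+1) (Finset.mem_filter.1 hf).2) : Multiset ℕ) := Sym.mem_coe.2 ha
    rw [Sym.coe_erase] at ha'
    exact (Finset.mem_sym_iff.1 (Finset.mem_filter.1 hf).1) a
      (Sym.mem_coe.1 (Multiset.mem_of_mem_erase ha'))
  · intro g hg
    simp only [Finset.mem_filter, Finset.mem_sym_iff]
    refine ⟨fun a ha => ?_, Sym.mem_cons_self _ _⟩
    rcases Sym.mem_cons.1 ha with h | h
    · subst h; simp
    · exact Finset.mem_sym_iff.1 hg a h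
  · intro f hf
    exact Sym.cons_erase (Finset.mem_filter.1 hf).2
  · intro g hg
    exact Sym.erase_cons_head g (m+1)
  · intro f hf
    have hc : (f : Multiset ℕ) = (m+1) ::ₘ (f.erase (m+1) (Finset.mem_filter.1 hf).2 : Multiset ℕ) := by
      rw [Sym.coe_erase]
      exact (Multiset.cons_erase (Finset.mem_filter.1 hf).2).symm
    rw [hc, Multiset.map_cons, Multiset.prod_cons]

end Rec

section CCRec

lemma hsymNT_zero_var (n : ℕ) : hsymNT 0 n = esymNT 0 n := by
  cases n with
  | zero => rw [hsymNT_zero, esymNT_zero]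
  | succ n =>
    unfold hsymNT esymNT
    rw [show Finset.Icc 1 0 = (∅ : Finset ℕ) by rfl]
    rw [Finset.sym_empty]
    have he : Finset.powersetCard (n+1) (∅ : Finset ℕ) = ∅ := by
      ext S
      simp only [Finset.mem_powersetCard, Finset.subset_empty, Finset.notMem_empty, iff_false,
        not_and]
      rintro rfl
      simp
    rw [he]
    simp

lemma hNT_nonpos (s : ℤ) (hs : s ≤ 0) (q : ℤ) (hq : 0 ≤ q) :
    hNT s q = esymNT (-s).toNat q.toNat := by
  unfold hNT
  rw [if_neg (by omega)]
  rcases lt_or_eq_of_le hs with h | h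
  · rw [if_neg (by omega)]
  · subst h; rw [if_pos le_rfl]; exact hsymNT_zero_var q.toNat

lemma hNT_rec_pos (s : ℤ) (hs : 1 ≤ s) (q : ℤ) :
    hNT (s-1) q = hNT s q + tvar s * hNT s (q-1) := by
  rcases lt_trichotomy q 0 with hq | hq | hq
  · rw [hNT_of_neg _ _ hq, hNT_of_neg _ _ hq, hNT_of_neg _ _ (by omega), mul_zero, add_zero]
  · subst hq
    rw [hNT_zero, hNT_zero, hNT_of_neg _ _ (by omega), mul_zero, add_zero]
  · have h1 : hNT (s-1) q = hsymNT (s-1).toNat q.toNat := by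
      unfold hNT; rw [if_neg (by omega), if_pos (by omega)]
    have h2 : hNT s q = hsymNT s.toNat q.toNat := by
      unfold hNT; rw [if_neg (by omega), if_pos (by omega)]
    have h3 : hNT s (q-1) = hsymNT s.toNat (q-1).toNat := by
      unfold hNT; rw [if_neg (by omega), if_pos (by omega)]
    rw [h1, h2, h3]
    have hm : s.toNat = (s-1).toNat + 1 := by omega
    have hj : q.toNat = (q-1).toNat + 1 := by omega
    have htv : tvar s = - negT ((s-1).toNat + 1) := by
      unfold tvar negT
      rw [neg_neg]
      congr 1
      congr 1
      omega
    rw [hm, hj, hsymNT_rec, htv]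
    ring
  
lemma hNT_rec_neg (s : ℤ) (hs : s ≤ 0) (q : ℤ) :
    hNT (s-1) q = hNT s q - tvar (s-1) * hNT s (q-1) := by
  rcases lt_trichotomy q 0 with hq | hq | hq
  · rw [hNT_of_neg _ _ hq, hNT_of_neg _ _ hq, hNT_of_neg _ _ (by omega), mul_zero, sub_zero]
  · subst hq
    rw [hNT_zero, hNT_zero, hNT_of_neg _ _ (by omega), mul_zero, sub_zero]
  · rw [hNT_nonpos s hs q hq.le, hNT_nonpos s hs (q-1) (by omega),
      hNT_nonpos (s-1) (by omega) q hq.le]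
    have hm : (-(s-1)).toNat = (-s).toNat + 1 := by omega
    have hj : q.toNat = (q-1).toNat + 1 := by omega
    have htv : tvar (s-1) = - negT ((-s).toNat + 1) := by
      unfold tvar negT
      rw [neg_neg]
      congr 2
      omega
    rw [hm, hj, esymNT_rec, htv]
    ring

lemma cc_rec_aux (s : ℤ) (x : P)
    (hrec : ∀ q : ℤ, hNT (s-1) q = hNT s q + x * hNT s (q-1)) (p : ℤ) :
    cc (s-1) p = cc s p + x * cc s (p-1) := by
  rcases lt_trichotomy p 0 with hp | hp | hp
  · rw [cc_of_neg _ _ hp, cc_of_neg _ _ hp, cc_of_neg _ _ (by omega), mul_zero, add_zero]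
  · subst hp
    rw [cc_zero, cc_zero, cc_of_neg _ _ (by omega), mul_zero, add_zero]
  · unfold cc
    have hstep : ∀ j : ℕ, cvar (p - j) * hNT (s-1) j
        = cvar (p - j) * hNT s j + x * (cvar (p - j) * hNT s ((j:ℤ)-1)) := by
      intro j; rw [hrec j]; ring
    rw [Finset.sum_congr rfl (fun j _ => hstep j), Finset.sum_add_distrib]
    congr 1
    have hP : p.toNat = (p-1).toNat + 1 := by omega
    rw [hP, ← Finset.mul_sum]
    congr 1
    rw [Finset.sum_range_succ']
    have hzero : cvar (p - (0:ℕ)) * hNT s ((0:ℕ) - 1) = 0 := by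
      rw [show ((0:ℕ):ℤ) - 1 = -1 by norm_num, hNT_of_neg _ _ (by norm_num), mul_zero]
    rw [hzero, add_zero]
    refine Finset.sum_congr rfl fun i _ => ?_
    have e1 : p - (((i:ℕ)+1 : ℕ) : ℤ) = p - 1 - i := by push_cast; ring
    have e2 : (((i:ℕ)+1 : ℕ) : ℤ) - 1 = (i : ℤ) := by push_cast; ring
    rw [e1, e2]

lemma cc_rec_pos (s : ℤ) (hs : 1 ≤ s) (p : ℤ) :
    cc (s-1) p = cc s p + tvar s * cc s (p-1) :=
  cc_rec_aux s (tvar s) (hNT_rec_pos s hs) p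

lemma cc_rec_neg (s : ℤ) (hs : s ≤ 0) (p : ℤ) :
    cc (s-1) p = cc s p - tvar (s-1) * cc s (p-1) := by
  have := cc_rec_aux s (- tvar (s-1)) (fun q => by rw [hNT_rec_neg s hs q]; ring) p
  rw [this]; ring

end CCRec

section Cmon

lemma cmon_eq_prod (β α : ℕ → ℤ) (N : ℕ) (hα : ∀ i, N ≤ i → α i = 0) :
    cmon β α = ∏ x ∈ Finset.range N, cc (β x) (α x) := by
  unfold cmon
  apply finprod_eq_prod_of_mulSupport_subset
  intro x hx
  simp only [Finset.coe_range, Set.mem_Iio]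
  by_contra h
  push_neg at h
  exact hx (show (fun i => cc (β i) (α i)) x = 1 by simp only; rw [hα x (by omega), cc_zero])

lemma finSupp_addAt (α : ℕ → ℤ) (m : ℕ) (c : ℤ) (hα : FinSupp α) : FinSupp (addAt α m c) := by
  obtain ⟨N, hN⟩ := hα
  refine ⟨max N (m+1), fun i hi => ?_⟩
  unfold addAt
  rw [hN i (by omega), if_neg (by omega), add_zero]

lemma raiseSeq_finsupp (n : (ℕ × ℕ) →₀ ℕ) (α : ℕ → ℤ) (hα : FinSupp α) :
    FinSupp (raiseSeq n α) := by
  obtain ⟨N, hN⟩ := hα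
  refine ⟨max N (n.support.sup (fun p => max p.1 p.2) + 1), fun m hm => ?_⟩
  unfold raiseSeq
  rw [hN m (by omega), Finset.sum_eq_zero, zero_add]
  intro p hp
  have h1 : max p.1 p.2 ≤ n.support.sup (fun p => max p.1 p.2) :=
    Finset.le_sup (f := fun p => max p.1 p.2) hp
  rw [if_neg (by omega), if_neg (by omega)]
  ring

lemma raiseSeq_addAt (n : (ℕ × ℕ) →₀ ℕ) (α : ℕ → ℤ) (m : ℕ) (c : ℤ) :
    raiseSeq n (addAt α m c) = addAt (raiseSeq n α) m c := by
  funext i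
  unfold raiseSeq addAt
  ring

lemma cmon_eq_zero (β α : ℕ → ℤ) (hα : FinSupp α) (m : ℕ) (hm : α m < 0) : cmon β α = 0 := by
  obtain ⟨N, hN⟩ := hα
  rw [cmon_eq_prod β α (max N (m+1)) (fun i hi => hN i (by omega))]
  apply Finset.prod_eq_zero (i := m)
  · simp only [Finset.mem_range]; omega
  · exact cc_of_neg _ _ hm

lemma cmon_shift (β : ℕ → ℤ) (m : ℕ) (x : P) (α : ℕ → ℤ) (hα : FinSupp α)
    (hx : cc (β m - 1) (α m) = cc (β m) (α m) + x * cc (β m) (α m - 1)) :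
    cmon (Function.update β m (β m - 1)) α = cmon β α + x * cmon β (addAt α m (-1)) := by
  obtain ⟨N₀, hN₀⟩ := hα
  set N := max N₀ (m+1) with hN
  have hαN : ∀ i, N ≤ i → α i = 0 := fun i hi => hN₀ i (by omega)
  have hα'N : ∀ i, N ≤ i → addAt α m (-1) i = 0 := by
    intro i hi
    unfold addAt
    rw [hαN i hi, if_neg (by omega), add_zero]
  rw [cmon_eq_prod _ _ N hαN, cmon_eq_prod _ _ N hαN, cmon_eq_prod _ _ N hα'N]
  have hmem : m ∈ Finset.range N := by simp only [Finset.mem_range]; omega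
  have e1 : ∀ i ∈ Finset.range N, cc (Function.update β m (β m - 1) i) (α i)
      = Function.update (fun i => cc (β i) (α i)) m (cc (β m - 1) (α m)) i := by
    intro i _
    rcases eq_or_ne i m with rfl | h
    · simp [Function.update_self]
    · simp [Function.update_of_ne h]
  have e2 : ∀ i ∈ Finset.range N, cc (β i) (addAt α m (-1) i)
      = Function.update (fun i => cc (β i) (α i)) m (cc (β m) (α m - 1)) i := by
    intro i _
    rcases eq_or_ne i m with rfl | h
    · simp only [Function.update_self]
      unfold addAt
      rw [if_pos rfl]
      ring_nf
    · simp only [Function.update_of_ne h]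
      unfold addAt
      rw [if_neg h, add_zero]
  rw [Finset.prod_congr rfl e1, Finset.prod_congr rfl e2,
    Finset.prod_update_of_mem hmem, Finset.prod_update_of_mem hmem]
  have e3 : ∏ i ∈ Finset.range N, cc (β i) (α i)
      = cc (β m) (α m) * ∏ i ∈ Finset.range N \ {m}, cc (β i) (α i) := by
    rw [← Finset.erase_eq]
    exact (Finset.mul_prod_erase _ _ hmem).symm
  rw [e3, hx]
  ring

end Cmon

section Finite

lemma smul_ne_zero_parts {c : ℤ} {x : P} (h : c • x ≠ 0) : c ≠ 0 ∧ x ≠ 0 := by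
  constructor
  · rintro rfl; exact h (zero_smul _ _)
  · rintro rfl; exact h (smul_zero _)

lemma roCoeff_supp_upper {B : Set (ℕ × ℕ)} (hB : B ⊆ Upper) {n : (ℕ × ℕ) →₀ ℕ}
    (h : roCoeff Upper B n ≠ 0) : ∀ p ∈ n.support, p ∈ Upper := by
  intro p hp
  by_contra hpU
  have hpB : p ∉ B := fun hh => hpU (hB hh)
  apply h
  apply Finset.prod_eq_zero hp
  unfold pairCoeff
  rw [if_neg hpU, if_neg hpB]

lemma raiseSeq_sub (n : (ℕ × ℕ) →₀ ℕ) (α : ℕ → ℤ) (m : ℕ) :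
    raiseSeq n α m - α m
      = ∑ p ∈ n.support, (n p : ℤ) * ((if p.1 = m then 1 else 0) - (if p.2 = m then 1 else 0)) := by
  unfold raiseSeq; ring

lemma applyRO_support_finite (B : Set (ℕ × ℕ)) (hB : B ⊆ Upper) (β α : ℕ → ℤ)
    (hα : FinSupp α) :
    (Function.support fun n : (ℕ × ℕ) →₀ ℕ =>
      (roCoeff Upper B n) • cmon β (raiseSeq n α)).Finite := by
  obtain ⟨N₀, hN₀⟩ := hα
  set N : ℕ := N₀ + 1 with hNdef
  have hαN : ∀ m, N ≤ m → α m = 0 := fun m hm => hN₀ m (by omega)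
  set K : ℕ := 2 * N * ∑ m ∈ Finset.range N, (α m).natAbs with hKdef
  set grid : Finset (ℕ × ℕ) := Finset.range N ×ˢ Finset.range N with hgriddef
  set g : (ℕ × ℕ) →₀ ℕ := ∑ p ∈ grid, Finsupp.single p K with hgdef
  apply Set.Finite.subset (Finset.Iic g).finite_toSet
  intro n hn
  simp only [Function.mem_support] at hn
  obtain ⟨hro, hcm⟩ := smul_ne_zero_parts hn
  have hU : ∀ p ∈ n.support, p ∈ Upper := roCoeff_supp_upper hB hro
  have hpos : ∀ m, 0 ≤ raiseSeq n α m := by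
    intro m
    by_contra hneg
    push_neg at hneg
    exact hcm (cmon_eq_zero β _ (raiseSeq_finsupp n α ⟨N₀, hN₀⟩) m hneg)
  have hgrid2 : ∀ p ∈ n.support, p.2 < N := by
    intro p hp
    by_contra hge
    push_neg at hge
    have hne : n.support.Nonempty := ⟨p, hp⟩
    obtain ⟨q, hq, hqsup⟩ := Finset.exists_mem_eq_sup n.support hne (fun p => p.2)
    set M : ℕ := n.support.sup (fun p => p.2) with hMdef
    have hMN : N ≤ M := le_trans hge (Finset.le_sup (f := fun p => p.2) hp)
    have hterm : ∀ p' ∈ n.support,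
        (n p' : ℤ) * ((if p'.1 = M then 1 else 0) - (if p'.2 = M then 1 else 0)) ≤ 0 := by
      intro p' hp'
      have hup := (hU p' hp').2
      have h2 : p'.2 ≤ M := Finset.le_sup (f := fun p => p.2) hp'
      have h1 : p'.1 ≠ M := by omega
      rw [if_neg h1]
      split_ifs with h2
      · simp
      · simp
    have htermq : (n q : ℤ) * ((if q.1 = M then 1 else 0) - (if q.2 = M then 1 else 0)) ≤ -1 := by
      have hup := (hU q hq).2
      have h1 : q.1 ≠ M := by omega
      have hnq : 1 ≤ n q := Nat.one_le_iff_ne_zero.2 (Finsupp.mem_support_iff.1 hq)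
      rw [if_neg h1, if_pos hqsup.symm]
      have h3 : (1 : ℤ) ≤ (n q : ℤ) := by exact_mod_cast hnq
      nlinarith
    have hsum : ∑ p' ∈ n.support,
        (n p' : ℤ) * ((if p'.1 = M then 1 else 0) - (if p'.2 = M then 1 else 0)) ≤ -1 := by
      rw [← Finset.add_sum_erase _ _ hq]
      have h2 : ∑ p' ∈ n.support.erase q,
          (n p' : ℤ) * ((if p'.1 = M then 1 else 0) - (if p'.2 = M then 1 else 0)) ≤ 0 :=
        Finset.sum_nonpos (fun p' hp' => hterm p' (Finset.mem_of_mem_erase hp'))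
      linarith
    have hent := hpos M
    have hrs := raiseSeq_sub n α M
    rw [hαN M hMN, sub_zero] at hrs
    rw [hrs] at hent
    linarith
  have hgrid1 : ∀ p ∈ n.support, p.1 < N := by
    intro p hp
    have := (hU p hp).2
    have := hgrid2 p hp
    omega
  have hval : ∀ q2 : ℕ × ℕ, n q2 ≤ K := by
    intro q2
    by_cases hq2 : q2 ∈ n.support
    · set S1 : ℤ := ∑ p ∈ n.support, (n p : ℤ) * ((p.2 : ℤ) - (p.1 : ℤ)) with hS1
      have hA : (n q2 : ℤ) ≤ S1 := by
        have hterm_nonneg : ∀ p ∈ n.support, (0:ℤ) ≤ (n p : ℤ) * ((p.2:ℤ) - (p.1:ℤ)) := by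
          intro p hp
          have h2 := (hU p hp).2
          have h3 : (0:ℤ) ≤ (p.2:ℤ) - (p.1:ℤ) := by omega
          exact mul_nonneg (Int.ofNat_nonneg _) h3
        have h1 : (n q2 : ℤ) * ((q2.2:ℤ) - (q2.1:ℤ)) ≤ S1 :=
          Finset.single_le_sum hterm_nonneg hq2
        have h2 : (1:ℤ) ≤ (q2.2:ℤ) - (q2.1:ℤ) := by
          have := (hU q2 hq2).2
          omega
        nlinarith [Int.ofNat_nonneg (n q2)]
      have hB2 : S1 = ∑ m ∈ Finset.range N, ((N:ℤ) - m) * (raiseSeq n α m - α m) := by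
        have e : ∀ m ∈ Finset.range N, ((N:ℤ)-m) * (raiseSeq n α m - α m)
            = ∑ p ∈ n.support,
              ((if p.1 = m then ((N:ℤ)-m) * (n p : ℤ) else 0)
                - (if p.2 = m then ((N:ℤ)-m) * (n p : ℤ) else 0)) := by
          intro m _
          rw [raiseSeq_sub, Finset.mul_sum]
          refine Finset.sum_congr rfl fun p _ => ?_
          split_ifs <;> ring
        rw [Finset.sum_congr rfl e, Finset.sum_comm]
        refine Finset.sum_congr rfl fun p hp => ?_
        rw [Finset.sum_sub_distrib]
        have i1 : ∑ m ∈ Finset.range N, (if p.1 = m then ((N:ℤ)-m) * (n p : ℤ) else 0)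
            = ((N:ℤ)-(p.1:ℤ)) * (n p : ℤ) := by
          rw [Finset.sum_ite_eq]
          rw [if_pos (Finset.mem_range.2 (hgrid1 p hp))]
        have i2 : ∑ m ∈ Finset.range N, (if p.2 = m then ((N:ℤ)-m) * (n p : ℤ) else 0)
            = ((N:ℤ)-(p.2:ℤ)) * (n p : ℤ) := by
          rw [Finset.sum_ite_eq]
          rw [if_pos (Finset.mem_range.2 (hgrid2 p hp))]
        rw [i1, i2]
        ring
      have hC : ∑ m ∈ Finset.range N, ((N:ℤ) - m) * (raiseSeq n α m - α m)
          ≤ (N:ℤ) * (∑ m ∈ Finset.range N, raiseSeq n α m)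
            + (N:ℤ) * ∑ m ∈ Finset.range N, ((α m).natAbs : ℤ) := by
        have hb : ∀ m ∈ Finset.range N, ((N:ℤ) - m) * (raiseSeq n α m - α m)
            ≤ (N:ℤ) * raiseSeq n α m + (N:ℤ) * ((α m).natAbs : ℤ) := by
          intro m hm
          have h1 : (0:ℤ) ≤ (N:ℤ) - m := by
            have := Finset.mem_range.1 hm; omega
          have h2 : (N:ℤ) - m ≤ N := by
            have : (0:ℤ) ≤ (m:ℤ) := Int.ofNat_nonneg m
            omega
          have h3 := hpos m
          have h4 : α m ≤ ((α m).natAbs : ℤ) := Int.le_natAbs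
          have h5 : -((α m).natAbs : ℤ) ≤ α m := by omega
          nlinarith
        calc ∑ m ∈ Finset.range N, ((N:ℤ) - m) * (raiseSeq n α m - α m)
            ≤ ∑ m ∈ Finset.range N,
              ((N:ℤ) * raiseSeq n α m + (N:ℤ) * ((α m).natAbs : ℤ)) :=
              Finset.sum_le_sum hb
          _ = (N:ℤ) * (∑ m ∈ Finset.range N, raiseSeq n α m)
              + (N:ℤ) * ∑ m ∈ Finset.range N, ((α m).natAbs : ℤ) := by
              rw [Finset.sum_add_distrib, ← Finset.mul_sum, ← Finset.mul_sum]
      have hD : ∑ m ∈ Finset.range N, raiseSeq n α m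
          ≤ ∑ m ∈ Finset.range N, ((α m).natAbs : ℤ) := by
        have hDe : ∑ m ∈ Finset.range N, (raiseSeq n α m - α m) = 0 := by
          rw [Finset.sum_congr rfl (fun m _ => raiseSeq_sub n α m), Finset.sum_comm]
          apply Finset.sum_eq_zero
          intro p hp
          have e2 : ∀ m ∈ Finset.range N,
              (n p : ℤ) * ((if p.1 = m then (1:ℤ) else 0) - (if p.2 = m then 1 else 0))
              = (if p.1 = m then (n p : ℤ) else 0) - (if p.2 = m then (n p : ℤ) else 0) := by
            intro m _
            split_ifs <;> ring
          rw [Finset.sum_congr rfl e2, Finset.sum_sub_distrib, Finset.sum_ite_eq,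
            Finset.sum_ite_eq, if_pos (Finset.mem_range.2 (hgrid1 p hp)),
            if_pos (Finset.mem_range.2 (hgrid2 p hp))]
          ring
        have hsplit : ∑ m ∈ Finset.range N, raiseSeq n α m = ∑ m ∈ Finset.range N, α m := by
          have := Finset.sum_sub_distrib (s := Finset.range N)
            (f := fun m => raiseSeq n α m) (g := fun m => α m)
          rw [this] at hDe
          linarith
        rw [hsplit]
        exact Finset.sum_le_sum (fun m _ => Int.le_natAbs)
      have hKc : (K : ℤ) = 2 * (N:ℤ) * ∑ m ∈ Finset.range N, ((α m).natAbs : ℤ) := by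
        rw [hKdef]
        push_cast
        ring
      have hfin : (n q2 : ℤ) ≤ (K : ℤ) := by
        rw [hKc]
        have hNpos : (0:ℤ) ≤ (N:ℤ) := Int.ofNat_nonneg N
        nlinarith [hA, hB2, hC, hD]
      exact_mod_cast hfin
    · rw [Finsupp.notMem_support_iff.1 hq2]
      exact Nat.zero_le _
  rw [Finset.mem_coe, Finset.mem_Iic, Finsupp.le_iff]
  intro p hp
  have hg : g p = K := by
    rw [hgdef, Finset.sum_apply']
    have e : ∀ p' ∈ grid, (Finsupp.single p' K) p = if p' = p then K else 0 := by
      intro p' _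
      rw [Finsupp.single_apply]
    rw [Finset.sum_congr rfl e, Finset.sum_ite_eq']
    rw [if_pos]
    rw [hgriddef]
    exact Finset.mem_product.2 ⟨Finset.mem_range.2 (hgrid1 p hp), Finset.mem_range.2 (hgrid2 p hp)⟩
  rw [hg]
  exact hval p

end Finite

section Split

lemma raiseSeq_add_single (i j : ℕ) (n : (ℕ × ℕ) →₀ ℕ) (α : ℕ → ℤ) :
    raiseSeq (n + Finsupp.single (i,j) 1) α = raiseSeq n (addAt (addAt α i 1) j (-1)) := by
  funext m
  set e := Finsupp.single (i,j) 1 with hedef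
  set d : ℕ × ℕ → ℤ := fun p => (if p.1 = m then (1:ℤ) else 0) - (if p.2 = m then 1 else 0)
    with hddef
  set S := n.support ∪ {(i,j)} with hSdef
  have hsub1 : (n + e).support ⊆ S :=
    Finsupp.support_add.trans (Finset.union_subset_union (le_refl _) Finsupp.support_single_subset)
  have hsub2 : n.support ⊆ S := Finset.subset_union_left
  have h1 : raiseSeq (n + e) α m = α m + ∑ p ∈ S, ((n + e) p : ℤ) * d p := by
    unfold raiseSeq
    congr 1
    exact Finset.sum_subset hsub1 (fun p _ hp => by
      rw [Finsupp.notMem_support_iff.1 hp]; ring)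
  have h2 : raiseSeq n (addAt (addAt α i 1) j (-1)) m
      = addAt (addAt α i 1) j (-1) m + ∑ p ∈ S, (n p : ℤ) * d p := by
    unfold raiseSeq
    congr 1
    exact Finset.sum_subset hsub2 (fun p _ hp => by
      rw [Finsupp.notMem_support_iff.1 hp]; ring)
  rw [h1, h2]
  have h3 : ∑ p ∈ S, ((n + e) p : ℤ) * d p
      = ∑ p ∈ S, (n p : ℤ) * d p + ∑ p ∈ S, (e p : ℤ) * d p := by
    rw [← Finset.sum_add_distrib]
    refine Finset.sum_congr rfl fun p _ => ?_
    rw [Finsupp.add_apply]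
    push_cast
    ring
  have h4 : ∑ p ∈ S, (e p : ℤ) * d p = d (i,j) := by
    rw [Finset.sum_eq_single_of_mem (i,j) (Finset.mem_union_right _ (Finset.mem_singleton_self _))]
    · rw [hedef, Finsupp.single_eq_same]; push_cast; ring
    · intro p _ hpne
      rw [hedef, Finsupp.single_apply, if_neg (fun h => hpne h.symm)]
      push_cast; ring
  rw [h3, h4]
  have h5 : d (i,j) = (if i = m then (1:ℤ) else 0) - (if j = m then 1 else 0) := rfl
  rw [h5]
  unfold addAt
  have e1 : (if i = m then (1:ℤ) else 0) = (if m = i then 1 else 0) := by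
    rcases eq_or_ne i m with rfl | h
    · simp
    · rw [if_neg h, if_neg (Ne.symm h)]
  have e2 : (if j = m then (1:ℤ) else 0) = (if m = j then 1 else 0) := by
    rcases eq_or_ne j m with rfl | h
    · simp
    · rw [if_neg h, if_neg (Ne.symm h)]
  rw [e1, e2]
  split_ifs <;> ring

lemma roCoeff_split (Dset : Set (ℕ × ℕ)) (i j : ℕ) (hij : (i,j) ∈ Upper)
    (hnot : (i,j) ∉ Dset) (n : (ℕ × ℕ) →₀ ℕ) :
    roCoeff Upper Dset n = roCoeff Upper (Dset ∪ {(i,j)}) n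
      + (if (i,j) ∈ n.support then
          roCoeff Upper (Dset ∪ {(i,j)}) (n - Finsupp.single (i,j) 1) else 0) := by
  classical
  set D' := Dset ∪ {(i,j)} with hD'def
  have hijD' : (i,j) ∈ D' := Set.mem_union_right _ rfl
  have hmem_iff : ∀ p : ℕ × ℕ, p ≠ (i,j) → ((p ∈ D') = (p ∈ Dset)) := by
    intro p hp
    apply propext
    rw [hD'def, Set.mem_union, Set.mem_singleton_iff]
    exact ⟨fun h => h.resolve_right hp, Or.inl⟩
  set e := Finsupp.single (i,j) 1 with hedef
  set Q : ℤ := ∏ p ∈ n.support.erase (i,j), pairCoeff (p ∈ Upper) (p ∈ Dset) (n p) with hQdef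
  have hQ' : ∏ p ∈ n.support.erase (i,j), pairCoeff (p ∈ Upper) (p ∈ D') (n p) = Q := by
    refine Finset.prod_congr rfl fun p hp => ?_
    rw [hmem_iff p (Finset.ne_of_mem_erase hp)]
  have hsubapply : ∀ p : ℕ × ℕ, p ≠ (i,j) → (n - e) p = n p := by
    intro p hp
    rw [Finsupp.tsub_apply, hedef, Finsupp.single_apply, if_neg (fun h => hp h.symm)]
    omega
  have hsubij : (n - e) (i,j) = n (i,j) - 1 := by
    rw [Finsupp.tsub_apply, hedef, Finsupp.single_eq_same]
  by_cases h0 : n (i,j) = 0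
  · have hni : (i,j) ∉ n.support := Finsupp.notMem_support_iff.2 h0
    rw [if_neg hni, add_zero]
    unfold roCoeff
    refine Finset.prod_congr rfl fun p hp => ?_
    rw [hmem_iff p (fun h => hni (h ▸ hp))]
  · have hni : (i,j) ∈ n.support := Finsupp.mem_support_iff.2 h0
    rw [if_pos hni]
    have hL : roCoeff Upper Dset n
        = pairCoeff ((i,j) ∈ Upper) ((i,j) ∈ Dset) (n (i,j)) * Q := by
      unfold roCoeff
      rw [hQdef]
      exact (Finset.mul_prod_erase _ _ hni).symm
    have hR1 : roCoeff Upper D' n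
        = pairCoeff ((i,j) ∈ Upper) ((i,j) ∈ D') (n (i,j)) * Q := by
      unfold roCoeff
      rw [← hQ']
      exact (Finset.mul_prod_erase _ _ hni).symm
    have hpcL : pairCoeff ((i,j) ∈ Upper) ((i,j) ∈ Dset) (n (i,j))
        = (if n (i,j) ≤ 1 then (-1:ℤ)^(n (i,j)) else 0) := by
      unfold pairCoeff
      rw [if_pos hij, if_neg hnot]
    have hpcR : pairCoeff ((i,j) ∈ Upper) ((i,j) ∈ D') (n (i,j)) = 2 * (-1:ℤ)^(n (i,j)) := by
      unfold pairCoeff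
      rw [if_pos hij, if_pos hijD']
    by_cases h1 : n (i,j) = 1
    · -- n - e has (i,j) removed from support
      have hsupp : (n - e).support = n.support.erase (i,j) := by
        ext p
        rcases eq_or_ne p (i,j) with rfl | hp
        · simp only [Finsupp.mem_support_iff, hsubij, h1, Finset.mem_erase]
          simp
        · simp only [Finsupp.mem_support_iff, hsubapply p hp, Finset.mem_erase, ne_eq, hp,
            not_false_iff, true_and]
      have hR2 : roCoeff Upper D' (n - e) = Q := by
        unfold roCoeff
        rw [hsupp, ← hQ']
        refine Finset.prod_congr rfl fun p hp => ?_
        rw [hsubapply p (Finset.ne_of_mem_erase hp)]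
      rw [hL, hR1, hR2, hpcL, hpcR, h1]
      norm_num
      ring
    · -- n (i,j) ≥ 2
      have h2 : 2 ≤ n (i,j) := by omega
      have hsupp : (n - e).support = n.support := by
        ext p
        rcases eq_or_ne p (i,j) with rfl | hp
        · simp only [Finsupp.mem_support_iff, hsubij]
          constructor
          · intro _; omega
          · intro _; omega
        · simp only [Finsupp.mem_support_iff, hsubapply p hp]
      have hni2 : (i,j) ∈ (n - e).support := by rw [hsupp]; exact hni
      have hR2 : roCoeff Upper D' (n - e)
          = pairCoeff ((i,j) ∈ Upper) ((i,j) ∈ D') ((n - e) (i,j)) * Q := by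
        unfold roCoeff
        rw [← (Finset.mul_prod_erase _ _ hni2), hsupp]
        congr 1
        rw [← hQ']
        refine Finset.prod_congr rfl fun p hp => ?_
        rw [hsubapply p (Finset.ne_of_mem_erase hp)]
      have hpcR2 : pairCoeff ((i,j) ∈ Upper) ((i,j) ∈ D') ((n - e) (i,j))
          = 2 * (-1:ℤ)^(n (i,j) - 1) := by
        unfold pairCoeff
        rw [if_pos hij, if_pos hijD', hsubij]
      have hpow : (-1:ℤ)^(n (i,j)) = -(-1:ℤ)^(n (i,j) - 1) := by
        conv_lhs => rw [show n (i,j) = (n (i,j) - 1) + 1 by omega]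
        rw [pow_succ]
        ring
      rw [hL, hR1, hR2, hpcL, hpcR, hpcR2, hpow, if_neg (by omega)]
      ring

end Split

section ApplyRO

lemma applyRO_shift (B : Set (ℕ × ℕ)) (hB : B ⊆ Upper) (β : ℕ → ℤ) (m : ℕ) (x : P)
    (α : ℕ → ℤ) (hα : FinSupp α)
    (hx : ∀ p : ℤ, cc (β m - 1) p = cc (β m) p + x * cc (β m) (p - 1)) :
    applyRO Upper B (Function.update β m (β m - 1)) α
      = applyRO Upper B β α + x * applyRO Upper B β (addAt α m (-1)) := by
  unfold applyRO
  have key : ∀ n : (ℕ × ℕ) →₀ ℕ,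
      (roCoeff Upper B n) • cmon (Function.update β m (β m - 1)) (raiseSeq n α)
      = (roCoeff Upper B n) • cmon β (raiseSeq n α)
        + x * ((roCoeff Upper B n) • cmon β (raiseSeq n (addAt α m (-1)))) := by
    intro n
    have hshift := cmon_shift β m x (raiseSeq n α) (raiseSeq_finsupp n α hα)
      (by
        have := hx (raiseSeq n α m)
        convert this using 3)
    rw [hshift, raiseSeq_addAt, smul_add]
    congr 1
    exact (mul_smul_comm _ _ _).symm
  rw [finsum_congr key]
  have hf1 := applyRO_support_finite B hB β α hα
  have hf2 := applyRO_support_finite B hB β (addAt α m (-1)) (finSupp_addAt α m (-1) hα)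
  have hf2' : (Function.support fun n : (ℕ × ℕ) →₀ ℕ =>
      x * ((roCoeff Upper B n) • cmon β (raiseSeq n (addAt α m (-1))))).Finite := by
    apply hf2.subset
    intro n hn
    simp only [Function.mem_support] at hn ⊢
    intro h
    exact hn (by rw [h, mul_zero])
  rw [finsum_add_distrib hf1 hf2']
  congr 1
  exact (mul_finsum _ x).symm

lemma applyRO_split (Dset : Set (ℕ × ℕ)) (hDU : Dset ⊆ Upper) (i j : ℕ)
    (hij : (i,j) ∈ Upper) (hnot : (i,j) ∉ Dset) (β α : ℕ → ℤ) (hα : FinSupp α) :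
    applyRO Upper Dset β α
      = applyRO Upper (Dset ∪ {(i,j)}) β α
        + applyRO Upper (Dset ∪ {(i,j)}) β (addAt (addAt α i 1) j (-1)) := by
  classical
  set D' := Dset ∪ {(i,j)} with hD'def
  have hD'U : D' ⊆ Upper := by
    rw [hD'def]
    exact Set.union_subset hDU (by intro p hp; rw [Set.mem_singleton_iff] at hp; subst hp; exact hij)
  set e := Finsupp.single (i,j) 1 with hedef
  set α'' := addAt (addAt α i 1) j (-1) with hα''def
  have hα'' : FinSupp α'' := finSupp_addAt _ _ _ (finSupp_addAt _ _ _ hα)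
  set X : ((ℕ × ℕ) →₀ ℕ) → P := fun n => cmon β (raiseSeq n α) with hXdef
  set G : ((ℕ × ℕ) →₀ ℕ) → P := fun n => (roCoeff Upper D' n) • cmon β (raiseSeq n α'') with hGdef
  have hGfin : (Function.support G).Finite := applyRO_support_finite D' hD'U β α'' hα''
  have hXeq : ∀ n : (ℕ × ℕ) →₀ ℕ, (i,j) ∈ n.support → X n = cmon β (raiseSeq (n - e) α'') := by
    intro n hn
    have hle : Finsupp.single (i,j) 1 ≤ n := by
      rw [Finsupp.single_le_iff]
      exact Nat.one_le_iff_ne_zero.2 (Finsupp.mem_support_iff.1 hn)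
    show cmon β (raiseSeq n α) = cmon β (raiseSeq (n - Finsupp.single (i,j) 1) α'')
    conv_lhs => rw [← tsub_add_cancel_of_le hle]
    rw [raiseSeq_add_single]
  have key : ∀ n : (ℕ × ℕ) →₀ ℕ,
      (roCoeff Upper Dset n) • X n
      = (roCoeff Upper D' n) • X n
        + (if (i,j) ∈ n.support then G (n - e) else 0) := by
    intro n
    rw [roCoeff_split Dset i j hij hnot n, add_smul]
    congr 1
    by_cases hn : (i,j) ∈ n.support
    · rw [if_pos hn, if_pos hn, hGdef, hXeq n hn]
    · rw [if_neg hn, if_neg hn, zero_smul]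
  unfold applyRO
  rw [finsum_congr key]
  have hf1 : (Function.support fun n : (ℕ × ℕ) →₀ ℕ =>
      (roCoeff Upper D' n) • cmon β (raiseSeq n α)).Finite :=
    applyRO_support_finite D' hD'U β α hα
  set Sf := hGfin.toFinset with hSfdef
  have hφinj : Function.Injective (fun m : (ℕ × ℕ) →₀ ℕ => m + e) :=
    fun a b hab => by simpa using add_left_injective e hab
  have hsupp2 : (Function.support fun n : (ℕ × ℕ) →₀ ℕ =>
      (if (i,j) ∈ n.support then G (n - e) else 0)) ⊆ ↑(Sf.image (fun m => m + e)) := by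
    intro n hn
    simp only [Function.mem_support] at hn
    by_cases hc : (i,j) ∈ n.support
    · rw [if_pos hc] at hn
      have hle : e ≤ n := by
        rw [hedef, Finsupp.single_le_iff]
        exact Nat.one_le_iff_ne_zero.2 (Finsupp.mem_support_iff.1 hc)
      have hback : n - e + e = n := tsub_add_cancel_of_le hle
      rw [Finset.coe_image]
      exact ⟨n - e, by rw [hSfdef, Set.Finite.coe_toFinset]; exact hn, hback⟩
    · rw [if_neg hc] at hn
      exact absurd rfl hn
  rw [finsum_add_distrib hf1 ((Sf.image (fun m => m + e)).finite_toSet.subset hsupp2)]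
  congr 1
  rw [finsum_eq_sum_of_support_subset _ hsupp2, Finset.sum_image (fun a _ b _ h => hφinj h)]
  have he : ∀ m : (ℕ × ℕ) →₀ ℕ, (if (i,j) ∈ (m + e).support then G (m + e - e) else 0) = G m := by
    intro m
    have h1 : (i,j) ∈ (m + e).support := by
      rw [Finsupp.mem_support_iff, Finsupp.add_apply, hedef, Finsupp.single_eq_same]
      omega
    rw [if_pos h1, add_tsub_cancel_right]
  rw [Finset.sum_congr rfl (fun m _ => he m)]
  exact (finsum_eq_sum_of_support_subset _ (by rw [hSfdef, Set.Finite.coe_toFinset])).symm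

end ApplyRO

theorem stmt2 (k : ℕ) (D : Set (ℕ × ℕ)) (hD : ValidPairs D) (i j : ℕ)
    (hnot : (i, j) ∉ D) (hcorner : ValidPairs (D ∪ {(i, j)}))
    (μ : ℕ → ℤ) (hμ0 : μ 0 = 0) (hfin : FinSupp μ)
    (hμi : (k : ℤ) < μ i) (hμj : μ j ≤ (k : ℤ)) (r : ℤ) (hr : r ≤ 1) :
    (Tpol k D (addAt μ j r) =
        Tpol k (D ∪ {(i, j)}) (addAt μ j r)
          + Tpol k (D ∪ {(i, j)}) (addAt (addAt μ i 1) j (r - 1))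
          + (tvar (gammaSeq k D (addAt μ j r) i - 1) - tvar (gammaSeq k D (addAt μ j r) j)) *
              applyRO Upper (D ∪ {(i, j)}) (gammaSeq k D (addAt μ j r)) (addAt μ j (r - 1))) ∧
    (μ i + μ j + r = 2 * (k : ℤ) + 1 + (aD D j : ℤ) →
      Tpol k D (addAt μ j r) =
        Tpol k (D ∪ {(i, j)}) (addAt μ j r)
          + Tpol k (D ∪ {(i, j)}) (addAt (addAt μ i 1) j (r - 1))) := by
  classical
  obtain ⟨D', hD'def⟩ : ∃ D'', D'' = D ∪ {(i, j)} := ⟨_, rfl⟩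
  rw [← hD'def] at hcorner ⊢
  have hmem' : ∀ p : ℕ × ℕ, p ∈ D' ↔ p ∈ D ∨ p = (i, j) := by
    intro p
    rw [hD'def, Set.mem_union, Set.mem_singleton_iff]
  have hijD' : (i, j) ∈ D' := (hmem' _).2 (Or.inr rfl)
  have hijU : (i, j) ∈ Upper := hcorner.1 hijD'
  have hi1 : 1 ≤ i := hijU.1
  have hilt : i < j := hijU.2
  have hij_ne : i ≠ j := Nat.ne_of_lt hilt
  have hD'U : D' ⊆ Upper := hcorner.1
  have hDU : D ⊆ Upper := hD.1
  set ν := addAt μ j r with hνdef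
  set γ := gammaSeq k D ν with hγdef
  set ν' := addAt (addAt μ i 1) j (r - 1) with hν'def
  have hνfin : FinSupp ν := finSupp_addAt μ j r hfin
  have hν'fin : FinSupp ν' := finSupp_addAt _ j (r-1) (finSupp_addAt μ i 1 hfin)
  have hνi : ν i = μ i := by rw [hνdef]; unfold addAt; rw [if_neg hij_ne, add_zero]
  have hνj : ν j = μ j + r := by rw [hνdef]; unfold addAt; rw [if_pos rfl]
  -- aD facts
  have hifilt : i ∈ (Finset.Ico 1 j).filter (fun i' => (i', j) ∉ D) := by
    rw [Finset.mem_filter, Finset.mem_Ico]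
    exact ⟨⟨hi1, hilt⟩, hnot⟩
  have haD_ge1 : 1 ≤ aD D j := by
    unfold aD
    exact Finset.card_pos.2 ⟨i, hifilt⟩
  have hfilt_eq : (Finset.Ico 1 j).filter (fun i' => (i', j) ∉ D')
      = ((Finset.Ico 1 j).filter (fun i' => (i', j) ∉ D)).erase i := by
    ext i'
    rw [Finset.mem_erase, Finset.mem_filter, Finset.mem_filter]
    constructor
    · rintro ⟨h1, h2⟩
      refine ⟨?_, h1, fun hD0 => h2 ((hmem' _).2 (Or.inl hD0))⟩
      rintro rfl
      exact h2 hijD'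
    · rintro ⟨h1, h2, h3⟩
      refine ⟨h2, fun hmem => ?_⟩
      rcases (hmem' _).1 hmem with hm | hm
      · exact h3 hm
      · exact h1 (congrArg Prod.fst hm)
  have haDj' : (aD D' j : ℤ) = (aD D j : ℤ) - 1 := by
    unfold aD
    rw [hfilt_eq, Finset.card_erase_of_mem hifilt]
    have := haD_ge1
    unfold aD at this
    push_cast [Nat.cast_sub this]
    ring
  have haDm : ∀ m, m ≠ j → aD D' m = aD D m := by
    intro m hm
    unfold aD
    congr 1
    ext i'
    rw [Finset.mem_filter, Finset.mem_filter]
    constructor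
    · rintro ⟨h1, h2⟩
      exact ⟨h1, fun hh => h2 ((hmem' _).2 (Or.inl hh))⟩
    · rintro ⟨h1, h2⟩
      refine ⟨h1, fun hh => ?_⟩
      rcases (hmem' _).1 hh with hh | hh
      · exact h2 hh
      · exact hm (congrArg Prod.snd hh)
  have haDi : aD D i = 0 := by
    unfold aD
    rw [Finset.card_eq_zero, Finset.filter_eq_empty_iff]
    intro i' hi'
    rw [Finset.mem_Ico] at hi'
    simp only [not_not]
    have hq : (i', i) ∈ Upper := ⟨hi'.1, hi'.2⟩
    have hh := hcorner.2.2 (i, j) hijD' (i', i) hq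
      (by simpa using hi'.2.le) (by simpa using hilt.le)
    rcases (hmem' _).1 hh with h | h
    · exact h
    · rw [Prod.mk.injEq] at h
      omega
  -- gamma computations
  have hγi_eq : γ i = (k : ℤ) + 1 - μ i := by
    rw [hγdef]
    unfold gammaSeq
    rw [hνi, haDi]
    push_cast
    ring
  have hγi_le : γ i ≤ 0 := by rw [hγi_eq]; omega
  have hγj_eq : γ j = (k : ℤ) + 1 - μ j - r + (aD D j : ℤ) := by
    rw [hγdef]
    unfold gammaSeq
    rw [hνj]
    ring
  have hγj_ge : 1 ≤ γ j := by
    rw [hγj_eq]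
    have : (1 : ℤ) ≤ (aD D j : ℤ) := by exact_mod_cast haD_ge1
    omega
  have hγ1 : gammaSeq k D' ν = Function.update γ j (γ j - 1) := by
    funext m
    rcases eq_or_ne m j with rfl | hm
    · rw [Function.update_self]
      show (k:ℤ) + 1 - ν m + (aD D' m : ℤ) = γ m - 1
      rw [haDj', hνj, hγj_eq]
      ring
    · rw [Function.update_of_ne hm]
      show (k:ℤ) + 1 - ν m + (aD D' m : ℤ) = γ m
      rw [haDm m hm]
      rfl
  have hγ2 : gammaSeq k D' ν' = Function.update γ i (γ i - 1) := by
    funext m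
    rcases eq_or_ne m i with rfl | hmi
    · rw [Function.update_self]
      show (k:ℤ) + 1 - ν' m + (aD D' m : ℤ) = γ m - 1
      have hv : ν' m = μ m + 1 := by
        rw [hν'def]; unfold addAt; rw [if_neg hij_ne, if_pos rfl]; ring
      rw [hv, haDm m hij_ne, haDi, hγi_eq]
      push_cast
      ring
    · rw [Function.update_of_ne hmi]
      rcases eq_or_ne m j with rfl | hmj
      · show (k:ℤ) + 1 - ν' m + (aD D' m : ℤ) = γ m
        have hv : ν' m = μ m + (r - 1) := by
          rw [hν'def]; unfold addAt; rw [if_neg (Ne.symm hij_ne), if_pos rfl]; ring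
        rw [hv, haDj', hγj_eq]
        ring
      · show (k:ℤ) + 1 - ν' m + (aD D' m : ℤ) = γ m
        have hv : ν' m = ν m := by
          rw [hν'def, hνdef]; unfold addAt; rw [if_neg hmj, if_neg hmi, if_neg hmj]; ring
        rw [hv, haDm m hmj]
        rfl
  -- sequence identities
  have hseq1 : addAt (addAt ν i 1) j (-1) = ν' := by
    funext m
    rw [hν'def, hνdef]
    unfold addAt
    split_ifs <;> ring
  have hseq2 : addAt ν j (-1) = addAt μ j (r - 1) := by
    funext m
    rw [hνdef]
    unfold addAt
    split_ifs <;> ring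
  have hseq3 : addAt ν' i (-1) = addAt μ j (r - 1) := by
    funext m
    rw [hν'def]
    unfold addAt
    split_ifs <;> ring
  -- the three applyRO identities
  have hsplit := applyRO_split D hDU i j hijU hnot γ ν hνfin
  rw [hseq1, ← hD'def] at hsplit
  have hshift1 := applyRO_shift D' hD'U γ j (tvar (γ j)) ν hνfin
    (fun p => cc_rec_pos (γ j) hγj_ge p)
  rw [hseq2] at hshift1
  have hshift2 := applyRO_shift D' hD'U γ i (-(tvar (γ i - 1))) ν' hν'fin
    (fun p => by rw [cc_rec_neg (γ i) hγi_le p]; ring)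
  rw [hseq3] at hshift2
  have hmain : Tpol k D ν =
      Tpol k D' ν + Tpol k D' ν'
        + (tvar (γ i - 1) - tvar (γ j)) * applyRO Upper D' γ (addAt μ j (r - 1)) := by
    have e0 : Tpol k D ν = applyRO Upper D γ ν := rfl
    have e1 : Tpol k D' ν = applyRO Upper D' (Function.update γ j (γ j - 1)) ν := by
      unfold Tpol
      rw [hγ1]
    have e2 : Tpol k D' ν' = applyRO Upper D' (Function.update γ i (γ i - 1)) ν' := by
      unfold Tpol
      rw [hγ2]
    rw [e0, e1, e2, hsplit, hshift1, hshift2]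
    ring
  refine ⟨hmain, fun hcond => ?_⟩
  have htv : tvar (γ i - 1) = tvar (γ j) := by
    unfold tvar
    congr 2
    rw [hγi_eq, hγj_eq]
    omega
  rw [hmain, htv, sub_self, zero_mul, add_zero]


end
end

section
/- Let λ = (λ_1,...,λ_{j-1}) and μ = (μ_{j+2},...,μ_ℓ) be integer vectors, and let D be a valid set of pairs such that (j,j+1) ∉ D and, for each h < j, (h,j) ∈ D if and only if (h,j+1) ∈ D. Then for any integers r and s, T(D, (λ,r,s,μ)) = −T(D, (λ,s−1,r+1,μ)) in ℤ[c,t]. In particular, if an integer sequence λ satisfies λ_{j+1} = λ_j + 1 (and D satisfies the above hypotheses at position j), then T(D, λ) = 0. -/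
open scoped Classical

noncomputable section

/-! ### Auxiliary material for Statement 3 -/

section Aux3

/-- The transposition of `j` and `j+1` on `ℕ`. -/
def tauF (j m : ℕ) : ℕ := if m = j then j + 1 else if m = j + 1 then j else m

lemma tauF_invol (j : ℕ) : Function.Involutive (tauF j) := by
  intro m; unfold tauF; split_ifs <;> omega

lemma tauF_j (j : ℕ) : tauF j j = j + 1 := by unfold tauF; split_ifs <;> omega

lemma tauF_j1 (j : ℕ) : tauF j (j + 1) = j := by unfold tauF; split_ifs <;> omega

lemma tauF_other (j m : ℕ) (h1 : m ≠ j) (h2 : m ≠ j + 1) : tauF j m = m := by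
  unfold tauF; split_ifs <;> omega

lemma tauF_eq_iff (j a b : ℕ) : tauF j a = b ↔ a = tauF j b := by
  constructor
  · rintro rfl; exact (tauF_invol j a).symm
  · rintro rfl; exact tauF_invol j b

/-- The involution of pairs induced by `tauF`, but fixing `(j,j+1)` and `(j+1,j)`. -/
def tpair (j : ℕ) (p : ℕ × ℕ) : ℕ × ℕ :=
  if p = (j, j + 1) ∨ p = (j + 1, j) then p else (tauF j p.1, tauF j p.2)

lemma tpair_spec (j : ℕ) (p : ℕ × ℕ) (h : ¬(p = (j, j + 1) ∨ p = (j + 1, j))) :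
    tpair j p = (tauF j p.1, tauF j p.2) := if_neg h

lemma tpair_x (j : ℕ) : tpair j (j, j + 1) = (j, j + 1) := by unfold tpair; simp

lemma tpair_y (j : ℕ) : tpair j (j + 1, j) = (j + 1, j) := by unfold tpair; simp

lemma tpair_not_special (j : ℕ) (p : ℕ × ℕ) (h : ¬(p = (j, j + 1) ∨ p = (j + 1, j))) :
    ¬(tpair j p = (j, j + 1) ∨ tpair j p = (j + 1, j)) := by
  rw [tpair_spec j p h]
  push_neg at h ⊢
  obtain ⟨h1, h2⟩ := h
  constructor
  · intro hc
    rw [Prod.ext_iff] at hc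
    obtain ⟨ha, hb⟩ := hc
    rw [tauF_eq_iff, tauF_j] at ha
    rw [tauF_eq_iff, tauF_j1] at hb
    exact h2 (Prod.ext ha hb)
  · intro hc
    rw [Prod.ext_iff] at hc
    obtain ⟨ha, hb⟩ := hc
    rw [tauF_eq_iff, tauF_j1] at ha
    rw [tauF_eq_iff, tauF_j] at hb
    exact h1 (Prod.ext ha hb)

lemma tpair_invol (j : ℕ) : Function.Involutive (tpair j) := by
  intro p
  by_cases h : p = (j, j + 1) ∨ p = (j + 1, j)
  · have hfix : tpair j p = p := if_pos h
    rw [hfix, hfix]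
  · rw [tpair_spec j p h, tpair, if_neg (by simpa [tpair_spec j p h] using tpair_not_special j p h)]
    simp [tauF_invol j p.1, tauF_invol j p.2]

lemma tpair_ne_x (j : ℕ) {p : ℕ × ℕ} (hp : p ≠ (j, j + 1)) : tpair j p ≠ (j, j + 1) := by
  intro hc
  apply hp
  have := congrArg (tpair j) hc
  rwa [tpair_invol j p, tpair_x] at this

/-- The swap `0 ↔ 1` on exponents of the distinguished pair. -/
def fswap (m : ℕ) : ℕ := if m = 0 then 1 else if m = 1 then 0 else m

lemma fswap_invol (m : ℕ) : fswap (fswap m) = m := by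
  rcases m with _ | _ | m <;> simp [fswap]

/-- The pair involution as a permutation. -/
def tpairE (j : ℕ) : Equiv.Perm (ℕ × ℕ) := Function.Involutive.toPerm _ (tpair_invol j)

/-- The involution on exponent finsupps implementing antisymmetry. -/
def PhiF (j : ℕ) (n : (ℕ × ℕ) →₀ ℕ) : (ℕ × ℕ) →₀ ℕ :=
  Finsupp.update (Finsupp.equivMapDomain (tpairE j) n) (j, j + 1) (fswap (n (j, j + 1)))

lemma PhiF_apply_x (j : ℕ) (n : (ℕ × ℕ) →₀ ℕ) : PhiF j n (j, j + 1) = fswap (n (j, j + 1)) := by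
  rw [PhiF, Finsupp.coe_update]
  simp

lemma PhiF_apply (j : ℕ) (n : (ℕ × ℕ) →₀ ℕ) (p : ℕ × ℕ) (hp : p ≠ (j, j + 1)) :
    PhiF j n p = n (tpair j p) := by
  rw [PhiF, Finsupp.coe_update, Function.update_apply, if_neg hp]
  have hcoe : ⇑(tpairE j) = tpair j := rfl
  have : p = (tpairE j) (tpair j p) := by rw [hcoe]; exact (tpair_invol j p).symm
  conv_lhs => rw [this]
  rw [Finsupp.equivMapDomain_apply, Equiv.symm_apply_apply]

lemma PhiF_invol (j : ℕ) : Function.Involutive (PhiF j) := by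
  intro n
  ext p
  by_cases hp : p = (j, j + 1)
  · subst hp
    rw [PhiF_apply_x, PhiF_apply_x, fswap_invol]
  · rw [PhiF_apply j _ p hp, PhiF_apply j n (tpair j p) (tpair_ne_x j hp), tpair_invol j p]

/-- Modified coefficient, equal to 1 at exponent 0. -/
def qC (D : Set (ℕ × ℕ)) (p : ℕ × ℕ) (m : ℕ) : ℤ :=
  if m = 0 then 1 else pairCoeff (p ∈ Upper) (p ∈ D) m

lemma roCoeff_eq_prod (D : Set (ℕ × ℕ)) (n : (ℕ × ℕ) →₀ ℕ) {S : Finset (ℕ × ℕ)}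
    (hS : n.support ⊆ S) : roCoeff Upper D n = ∏ p ∈ S, qC D p (n p) := by
  rw [roCoeff]
  have h1 : ∏ p ∈ n.support, pairCoeff (p ∈ Upper) (p ∈ D) (n p)
      = ∏ p ∈ n.support, qC D p (n p) :=
    Finset.prod_congr rfl fun p hp => by
      rw [qC, if_neg (Finsupp.mem_support_iff.mp hp)]
  rw [h1]
  exact Finset.prod_subset hS fun p _ hp => by
    rw [qC, if_pos (Finsupp.notMem_support_iff.mp hp)]

lemma mem_Upper_iff (p : ℕ × ℕ) : p ∈ Upper ↔ 1 ≤ p.1 ∧ p.1 < p.2 := Iff.rfl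

lemma tpair_mem_Upper (j : ℕ) (hj : 1 ≤ j) (p : ℕ × ℕ)
    (h : ¬(p = (j, j + 1) ∨ p = (j + 1, j))) : tpair j p ∈ Upper ↔ p ∈ Upper := by
  obtain ⟨a, b⟩ := p
  rw [tpair_spec _ _ h, mem_Upper_iff, mem_Upper_iff]
  simp only [Prod.mk.injEq, not_or, not_and] at h
  simp only []
  unfold tauF
  split_ifs <;> omega

end Aux3

section Aux3b

variable {k j : ℕ} {D : Set (ℕ × ℕ)}

lemma not_mem_D_of_not_upper (hD : ValidPairs D) {p : ℕ × ℕ} (hp : p ∉ Upper) : p ∉ D :=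
  fun hmem => hp (hD.1 hmem)

lemma x_mem_Upper (hj : 1 ≤ j) : (j, j + 1) ∈ Upper := ⟨hj, by omega⟩

lemma y_not_mem_Upper : (j + 1, j) ∉ Upper := by
  rw [mem_Upper_iff]; push_neg; intro _; omega

lemma not_mem_D_jl (hD : ValidPairs D) (hj : 1 ≤ j) (hnot : (j, j + 1) ∉ D)
    (l : ℕ) (hl : j + 1 ≤ l) : (j, l) ∉ D := fun hmem =>
  hnot (hD.2.2 _ hmem (j, j + 1) (x_mem_Upper hj) le_rfl hl)

lemma not_mem_D_j1l (hD : ValidPairs D) (hj : 1 ≤ j) (hnot : (j, j + 1) ∉ D)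
    (l : ℕ) (hl : j + 1 ≤ l) : (j + 1, l) ∉ D := fun hmem =>
  hnot (hD.2.2 _ hmem (j, j + 1) (x_mem_Upper hj) (by omega) hl)

lemma tpair_mem_D (hD : ValidPairs D) (hj : 1 ≤ j) (hnot : (j, j + 1) ∉ D)
    (hcol : ∀ h, 1 ≤ h → h < j → ((h, j) ∈ D ↔ (h, j + 1) ∈ D)) (p : ℕ × ℕ)
    (h : ¬(p = (j, j + 1) ∨ p = (j + 1, j))) : tpair j p ∈ D ↔ p ∈ D := by
  by_cases hU : p ∈ Upper
  · obtain ⟨a, b⟩ := p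
    rw [mem_Upper_iff] at hU
    simp only at hU
    have htp : tpair j (a, b) = (tauF j a, tauF j b) := tpair_spec j (a, b) h
    simp only [Prod.mk.injEq, not_or, not_and] at h
    by_cases hbj : b = j
    · have e1 : tauF j a = a := tauF_other j a (by omega) (by omega)
      have e2 : tauF j b = j + 1 := by rw [hbj]; exact tauF_j j
      rw [htp, e1, e2, hbj]
      exact (hcol a hU.1 (by omega)).symm
    · by_cases hbj1 : b = j + 1
      · have haj : a ≠ j := fun hc => (h.1 hc) hbj1
        have ha1 : a < j := by omega
        have e1 : tauF j a = a := tauF_other j a (by omega) (by omega)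
        have e2 : tauF j b = j := by rw [hbj1]; exact tauF_j1 j
        rw [htp, e1, e2, hbj1]
        exact hcol a hU.1 ha1
      · by_cases haj : a = j
        · have e1 : tauF j a = j + 1 := by rw [haj]; exact tauF_j j
          have e2 : tauF j b = b := tauF_other j b hbj hbj1
          rw [htp, e1, e2]
          exact iff_of_false (not_mem_D_j1l hD hj hnot b (by omega))
            (haj ▸ not_mem_D_jl hD hj hnot b (by omega))
        · by_cases haj1 : a = j + 1
          · have e1 : tauF j a = j := by rw [haj1]; exact tauF_j1 j
            have e2 : tauF j b = b := tauF_other j b hbj hbj1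
            rw [htp, e1, e2]
            exact iff_of_false (not_mem_D_jl hD hj hnot b (by omega))
              (haj1 ▸ not_mem_D_j1l hD hj hnot b (by omega))
          · rw [htp, tauF_other j a haj haj1, tauF_other j b hbj hbj1]
  · exact iff_of_false
      (not_mem_D_of_not_upper hD (fun hc => hU ((tpair_mem_Upper j hj p h).mp hc)))
      (not_mem_D_of_not_upper hD hU)

lemma qC_tpair (hD : ValidPairs D) (hj : 1 ≤ j) (hnot : (j, j + 1) ∉ D)
    (hcol : ∀ h, 1 ≤ h → h < j → ((h, j) ∈ D ↔ (h, j + 1) ∈ D)) (p : ℕ × ℕ)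
    (hp : p ≠ (j, j + 1)) (m : ℕ) : qC D (tpair j p) m = qC D p m := by
  by_cases hy : p = (j + 1, j)
  · subst hy; rw [tpair_y]
  · rw [qC, qC,
      show ((tpair j p ∈ Upper) = (p ∈ Upper)) from
        propext (tpair_mem_Upper j hj p (by push_neg; exact ⟨hp, hy⟩)),
      show ((tpair j p ∈ D) = (p ∈ D)) from
        propext (tpair_mem_D hD hj hnot hcol p (by push_neg; exact ⟨hp, hy⟩))]

lemma qC_x (hj : 1 ≤ j) (hnot : (j, j + 1) ∉ D) (m : ℕ) :
    qC D (j, j + 1) (fswap m) = - qC D (j, j + 1) m := by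
  rw [qC, qC,
    show (((j, j + 1) ∈ Upper) = True) from propext (iff_true_intro (x_mem_Upper hj)),
    show (((j, j + 1) ∈ D) = False) from propext (iff_false_intro hnot)]
  rcases m with _ | m
  · norm_num [fswap, pairCoeff]
  · rcases m with _ | m
    · norm_num [fswap, pairCoeff]
    · have h1 : fswap (m + 1 + 1) = m + 1 + 1 := by simp [fswap]
      rw [h1]
      have h2 : ¬ (m + 1 + 1 = 0) := by omega
      have h3 : ¬ (m + 1 + 1 ≤ 1) := by omega
      simp [pairCoeff, h2, h3]

/-- The common index set for the reindexing arguments. -/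
def bigS (j : ℕ) (n : (ℕ × ℕ) →₀ ℕ) : Finset (ℕ × ℕ) :=
  (n.support ∪ n.support.image (tpair j)) ∪ {(j, j + 1), (j + 1, j)}

lemma subset_bigS (j : ℕ) (n : (ℕ × ℕ) →₀ ℕ) : n.support ⊆ bigS j n := fun p hp => by
  rw [bigS]; simp only [Finset.mem_union]; left; left; exact hp

lemma phi_subset_bigS (j : ℕ) (n : (ℕ × ℕ) →₀ ℕ) : (PhiF j n).support ⊆ bigS j n := by
  intro p hp
  rw [Finsupp.mem_support_iff] at hp
  by_cases hx : p = (j, j + 1)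
  · subst hx; rw [bigS]; simp
  · rw [PhiF_apply j n p hx] at hp
    rw [bigS]
    simp only [Finset.mem_union, Finset.mem_image]
    left; right
    exact ⟨tpair j p, Finsupp.mem_support_iff.mpr hp, tpair_invol j p⟩

lemma x_mem_bigS (j : ℕ) (n : (ℕ × ℕ) →₀ ℕ) : (j, j + 1) ∈ bigS j n := by
  rw [bigS]; simp

lemma bigS_map (j : ℕ) (n : (ℕ × ℕ) →₀ ℕ) : ∀ p ∈ bigS j n, tpair j p ∈ bigS j n := by
  intro p hp
  rw [bigS, Finset.mem_union, Finset.mem_union] at hp ⊢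
  rcases hp with (hp | hp) | hp
  · left; right; exact Finset.mem_image_of_mem _ hp
  · left; left
    obtain ⟨q, hq, rfl⟩ := Finset.mem_image.mp hp
    rwa [tpair_invol j q]
  · right
    simp only [Finset.mem_insert, Finset.mem_singleton] at hp ⊢
    rcases hp with rfl | rfl
    · left; exact tpair_x j
    · right; exact tpair_y j

lemma roCoeff_PhiF (hD : ValidPairs D) (hj : 1 ≤ j) (hnot : (j, j + 1) ∉ D)
    (hcol : ∀ h, 1 ≤ h → h < j → ((h, j) ∈ D ↔ (h, j + 1) ∈ D)) (n : (ℕ × ℕ) →₀ ℕ) :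
    roCoeff Upper D (PhiF j n) = - roCoeff Upper D n := by
  rw [roCoeff_eq_prod D n (subset_bigS j n), roCoeff_eq_prod D (PhiF j n) (phi_subset_bigS j n)]
  have hxS := x_mem_bigS j n
  rw [← Finset.prod_erase_mul _ _ hxS, ← Finset.prod_erase_mul _ _ hxS]
  have h1 : ∏ p ∈ (bigS j n).erase (j, j + 1), qC D p (PhiF j n p)
      = ∏ p ∈ (bigS j n).erase (j, j + 1), qC D p (n p) := by
    apply Finset.prod_nbij' (tpair j) (tpair j)
    · intro p hp
      rw [Finset.mem_erase] at hp ⊢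
      exact ⟨tpair_ne_x j hp.1, bigS_map j n p hp.2⟩
    · intro p hp
      rw [Finset.mem_erase] at hp ⊢
      exact ⟨tpair_ne_x j hp.1, bigS_map j n p hp.2⟩
    · intro p _; exact tpair_invol j p
    · intro p _; exact tpair_invol j p
    · intro p hp
      rw [Finset.mem_erase] at hp
      rw [PhiF_apply j n p hp.1, qC_tpair hD hj hnot hcol p hp.1]
  rw [h1, PhiF_apply_x, qC_x hj hnot]
  ring

lemma raiseSeq_eq_sum (n : (ℕ × ℕ) →₀ ℕ) (α : ℕ → ℤ) {S : Finset (ℕ × ℕ)}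
    (hS : n.support ⊆ S) (m : ℕ) :
    raiseSeq n α m = α m + ∑ p ∈ S,
      (n p : ℤ) * ((if p.1 = m then 1 else 0) - (if p.2 = m then 1 else 0)) := by
  rw [raiseSeq]
  congr 1
  exact Finset.sum_subset hS fun p _ hp => by
    rw [Finsupp.notMem_support_iff.mp hp]; push_cast; ring

lemma raise_PhiF (hj : 1 ≤ j) (ν : ℕ → ℤ) (r s : ℤ) (n : (ℕ × ℕ) →₀ ℕ)
    (hy : n (j + 1, j) = 0) (hx : n (j, j + 1) ≤ 1) (m : ℕ) :
    raiseSeq n (twoSet ν j (s - 1) (r + 1)) (tauF j m)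
      = raiseSeq (PhiF j n) (twoSet ν j r s) m := by
  rw [raiseSeq_eq_sum n _ (subset_bigS j n) (tauF j m),
    raiseSeq_eq_sum (PhiF j n) _ (phi_subset_bigS j n) m]
  have hreindex : ∑ p ∈ bigS j n,
      (PhiF j n p : ℤ) * ((if p.1 = m then 1 else 0) - (if p.2 = m then 1 else 0))
      = ∑ p ∈ bigS j n,
        (PhiF j n (tpair j p) : ℤ)
          * ((if (tpair j p).1 = m then 1 else 0) - (if (tpair j p).2 = m then 1 else 0)) := by
    apply Finset.sum_nbij' (tpair j) (tpair j) (bigS_map j n) (bigS_map j n)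
    · intro p _; exact tpair_invol j p
    · intro p _; exact tpair_invol j p
    · intro p _; rw [tpair_invol j p]
  rw [hreindex]
  have hxS := x_mem_bigS j n
  rw [← Finset.add_sum_erase _
    (fun p => (n p : ℤ) * ((if p.1 = tauF j m then 1 else 0) - (if p.2 = tauF j m then 1 else 0)))
    hxS,
    ← Finset.add_sum_erase _
    (fun p => (PhiF j n (tpair j p) : ℤ)
      * ((if (tpair j p).1 = m then 1 else 0) - (if (tpair j p).2 = m then 1 else 0)))
    hxS]
  have hrest : ∑ p ∈ (bigS j n).erase (j, j + 1),
      (PhiF j n (tpair j p) : ℤ)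
        * ((if (tpair j p).1 = m then 1 else 0) - (if (tpair j p).2 = m then 1 else 0))
      = ∑ p ∈ (bigS j n).erase (j, j + 1),
        (n p : ℤ) * ((if p.1 = tauF j m then 1 else 0) - (if p.2 = tauF j m then 1 else 0)) := by
    apply Finset.sum_congr rfl
    intro p hp
    rw [Finset.mem_erase] at hp
    have hPhi : PhiF j n (tpair j p) = n p := by
      rw [PhiF_apply j n (tpair j p) (tpair_ne_x j hp.1), tpair_invol j p]
    rw [hPhi]
    by_cases hyp : p = (j + 1, j)
    · subst hyp
      rw [hy]
      push_cast
      ring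
    · have hns : ¬(p = (j, j + 1) ∨ p = (j + 1, j)) := by push_neg; exact ⟨hp.1, hyp⟩
      rw [tpair_spec j p hns]
      have e1 : ((tauF j p.1 = m)) = (p.1 = tauF j m) := propext (tauF_eq_iff j p.1 m)
      have e2 : ((tauF j p.2 = m)) = (p.2 = tauF j m) := propext (tauF_eq_iff j p.2 m)
      simp only [e1, e2]
  have hPhix : PhiF j n (tpair j (j, j + 1)) = fswap (n (j, j + 1)) := by
    rw [tpair_x, PhiF_apply_x]
  rw [hrest, hPhix, tpair_x]
  have hf : (fswap (n (j, j + 1)) : ℤ) = 1 - (n (j, j + 1) : ℤ) := by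
    interval_cases h : n (j, j + 1) <;> norm_num [fswap]
  have hbd : twoSet ν j (s - 1) (r + 1) (tauF j m)
        + (n (j, j + 1) : ℤ) * ((if (j, j + 1).1 = tauF j m then 1 else 0)
            - (if (j, j + 1).2 = tauF j m then 1 else 0))
      = twoSet ν j r s m
        + (fswap (n (j, j + 1)) : ℤ) * ((if (j, j + 1).1 = m then 1 else 0)
            - (if (j, j + 1).2 = m then 1 else 0)) := by
    by_cases hmj : m = j
    · rw [hmj, tauF_j]
      simp only [twoSet]
      norm_num
      first
        | linarith [hf]
        | (split_ifs <;> first | omega | linarith [hf])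
    · by_cases hmj1 : m = j + 1
      · rw [hmj1, tauF_j1]
        simp only [twoSet]
        norm_num
        first
          | linarith [hf]
          | (split_ifs <;> first | omega | linarith [hf])
      · rw [tauF_other j m hmj hmj1]
        simp only [twoSet]
        norm_num
        first
          | linarith [hf]
          | (split_ifs <;> first | omega | linarith [hf])
  linarith [hbd]

lemma aD_succ (hj : 1 ≤ j) (hnot : (j, j + 1) ∉ D)
    (hcol : ∀ h, 1 ≤ h → h < j → ((h, j) ∈ D ↔ (h, j + 1) ∈ D)) :
    aD D (j + 1) = aD D j + 1 := by
  unfold aD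
  rw [Nat.Ico_succ_right_eq_insert_Ico hj, Finset.filter_insert, if_pos hnot]
  rw [Finset.card_insert_of_notMem (by
    intro hc
    have := Finset.mem_of_mem_filter j hc
    rw [Finset.mem_Ico] at this
    omega)]
  have hfil : Finset.filter (fun i => (i, j + 1) ∉ D) (Finset.Ico 1 j)
      = Finset.filter (fun i => (i, j) ∉ D) (Finset.Ico 1 j) := by
    apply Finset.filter_congr
    intro i hi
    rw [Finset.mem_Ico] at hi
    have := hcol i hi.1 hi.2
    simp only [this]
  rw [hfil]

lemma gamma_swap (k : ℕ) (hj : 1 ≤ j) (hnot : (j, j + 1) ∉ D)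
    (hcol : ∀ h, 1 ≤ h → h < j → ((h, j) ∈ D ↔ (h, j + 1) ∈ D)) (ν : ℕ → ℤ) (r s : ℤ) :
    gammaSeq k D (twoSet ν j (s - 1) (r + 1))
      = fun i => gammaSeq k D (twoSet ν j r s) (tauF j i) := by
  funext i
  unfold gammaSeq twoSet
  by_cases hij : i = j
  · subst hij
    rw [tauF_j, aD_succ hj hnot hcol]
    simp only [if_pos rfl, if_neg (show ¬ (i + 1 = i) by omega)]
    push_cast
    ring
  · by_cases hij1 : i = j + 1
    · subst hij1
      rw [tauF_j1]
      simp only [if_pos rfl, if_neg (show ¬ (j + 1 = j) by omega),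
        if_neg (show ¬ (j = j + 1) by omega)]
      rw [aD_succ hj hnot hcol]
      push_cast
      ring
    · rw [tauF_other j i hij hij1]
      simp only [if_neg hij, if_neg hij1]

lemma cmon_swap (γ β : ℕ → ℤ) (j : ℕ) :
    cmon (fun i => γ (tauF j i)) β = cmon γ (fun i => β (tauF j i)) := by
  rw [cmon, cmon]
  have h2 := finprod_comp_equiv (Function.Involutive.toPerm _ (tauF_invol j))
    (f := fun i' => cc (γ i') (β (tauF j i')))
  rw [← h2]
  apply finprod_congr
  intro i
  have hcoe : (Function.Involutive.toPerm _ (tauF_invol j)) i = tauF j i := rfl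
  simp only [hcoe]
  rw [tauF_invol j i]

lemma pointwise_term (hD : ValidPairs D) (hj : 1 ≤ j) (hnot : (j, j + 1) ∉ D)
    (hcol : ∀ h, 1 ≤ h → h < j → ((h, j) ∈ D ↔ (h, j + 1) ∈ D)) (ν : ℕ → ℤ) (r s : ℤ)
    (n : (ℕ × ℕ) →₀ ℕ) :
    roCoeff Upper D n •
        cmon (gammaSeq k D (twoSet ν j (s - 1) (r + 1))) (raiseSeq n (twoSet ν j (s - 1) (r + 1)))
      = - (roCoeff Upper D (PhiF j n) •
          cmon (gammaSeq k D (twoSet ν j r s)) (raiseSeq (PhiF j n) (twoSet ν j r s))) := by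
  rw [roCoeff_PhiF hD hj hnot hcol n, neg_smul, neg_neg]
  by_cases hy : n (j + 1, j) = 0
  · by_cases hx : n (j, j + 1) ≤ 1
    · congr 1
      rw [gamma_swap k hj hnot hcol ν r s, cmon_swap]
      congr 1
      funext m
      exact raise_PhiF hj ν r s n hy hx m
    · have h0 : roCoeff Upper D n = 0 := by
        rw [roCoeff]
        apply Finset.prod_eq_zero (Finsupp.mem_support_iff.mpr (show n (j, j + 1) ≠ 0 by omega))
        rw [show (((j, j + 1) ∈ Upper) = True) from propext (iff_true_intro (x_mem_Upper hj)),
          show (((j, j + 1) ∈ D) = False) from propext (iff_false_intro hnot)]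
        simp [pairCoeff, hx]
      rw [h0, zero_smul, zero_smul]
  · have h0 : roCoeff Upper D n = 0 := by
      rw [roCoeff]
      apply Finset.prod_eq_zero (Finsupp.mem_support_iff.mpr hy)
      rw [show (((j + 1, j) ∈ Upper) = False) from propext (iff_false_intro y_not_mem_Upper),
        show (((j + 1, j) ∈ D) = False) from
          propext (iff_false_intro (not_mem_D_of_not_upper hD y_not_mem_Upper))]
      simp [pairCoeff]
    rw [h0, zero_smul, zero_smul]

lemma Tpol_antisym (hD : ValidPairs D) (hj : 1 ≤ j) (hnot : (j, j + 1) ∉ D)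
    (hcol : ∀ h, 1 ≤ h → h < j → ((h, j) ∈ D ↔ (h, j + 1) ∈ D)) (ν : ℕ → ℤ) (r s : ℤ) :
    Tpol k D (twoSet ν j (s - 1) (r + 1)) = - Tpol k D (twoSet ν j r s) := by
  rw [Tpol, Tpol, applyRO, applyRO]
  rw [finsum_congr (pointwise_term hD hj hnot hcol ν r s)]
  rw [finsum_neg_distrib]
  congr 1
  have h2 := finsum_comp_equiv (Function.Involutive.toPerm _ (PhiF_invol j))
    (f := fun n' : (ℕ × ℕ) →₀ ℕ => roCoeff Upper D n' •
      cmon (gammaSeq k D (twoSet ν j r s)) (raiseSeq n' (twoSet ν j r s)))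
  calc ∑ᶠ n, roCoeff Upper D (PhiF j n) •
        cmon (gammaSeq k D (twoSet ν j r s)) (raiseSeq (PhiF j n) (twoSet ν j r s))
      = ∑ᶠ n, (fun n' : (ℕ × ℕ) →₀ ℕ => roCoeff Upper D n' •
          cmon (gammaSeq k D (twoSet ν j r s)) (raiseSeq n' (twoSet ν j r s)))
          ((Function.Involutive.toPerm _ (PhiF_invol j)) n) := rfl
    _ = ∑ᶠ n, roCoeff Upper D n •
          cmon (gammaSeq k D (twoSet ν j r s)) (raiseSeq n (twoSet ν j r s)) := h2

end Aux3b

theorem stmt3 (k j : ℕ) (hj : 1 ≤ j) (D : Set (ℕ × ℕ)) (hD : ValidPairs D)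
    (hnot : (j, j + 1) ∉ D)
    (hcol : ∀ h, 1 ≤ h → h < j → ((h, j) ∈ D ↔ (h, j + 1) ∈ D))
    (ν : ℕ → ℤ) (hν0 : ν 0 = 0) (hfin : FinSupp ν) :
    (∀ r s : ℤ, Tpol k D (twoSet ν j r s) = - Tpol k D (twoSet ν j (s - 1) (r + 1))) ∧
    (ν (j + 1) = ν j + 1 → Tpol k D ν = 0) := by
  constructor
  · intro r s
    rw [Tpol_antisym hD hj hnot hcol ν r s, neg_neg]
  · intro hν1
    have h1 : twoSet ν j (ν j) (ν (j + 1)) = ν := by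
      funext m
      unfold twoSet
      split_ifs with h h'
      · subst h; rfl
      · subst h'; rfl
      · rfl
    have h2 : twoSet ν j (ν (j + 1) - 1) (ν j + 1) = ν := by
      funext m
      unfold twoSet
      split_ifs with h h'
      · subst h; omega
      · subst h'; omega
      · rfl
    have key := Tpol_antisym (k := k) hD hj hnot hcol ν (ν j) (ν (j + 1))
    rw [h1, h2] at key
    have h3 : Tpol k D ν + Tpol k D ν = 0 := eq_neg_iff_add_eq_zero.mp key
    have h4 : (2 : P) * Tpol k D ν = 0 := by rw [two_mul]; exact h3
    rcases mul_eq_zero.mp h4 with h | h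
    · exact absurd h (by norm_num)
    · exact h

end
end
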